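/- Let p, q ≥ 1 be coprime integers and let ℓ > 0 be a rational number such that the lattice Λ_{ℓp, ℓq} = {(m·ℓp, n·ℓq) : m, n ∈ ℤ} is disjoint from D′. Then for every integer r ≥ 1, setting λ = 1 + (ℓ − 1)/r, the lattice Λ_{λp, λq} = {(m·λp, n·λq) : m, n ∈ ℤ} is disjoint from D′. -/
import Mathlib

/-- The punctured enlarged diagonal set `D′`. -/
def Dprime : Set (ℝ × ℝ) :=
  ⋃ n : ℤ, {p : ℝ × ℝ | (n : ℝ) ≤ p.1 ∧ p.1 ≤ (n : ℝ) + 1 ∧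
    (n : ℝ) < p.2 ∧ p.2 < (n : ℝ) + 1 ∧ p.1 ≠ p.2}

/-- The rectangular lattice `Λ_{μ,ν}`. -/
def RectLat (μ ν : ℝ) : Set (ℝ × ℝ) :=
  {p : ℝ × ℝ | ∃ m n : ℤ, p = ((m : ℝ) * μ, (n : ℝ) * ν)}

lemma key_lemma (l lam : ℝ) (hl : 0 < l) (r : ℤ) (hr : 1 ≤ r)
    (hlam : lam = 1 + (l - 1) / (r : ℝ)) (A B k : ℤ) (hBA : B < A)
    (h1 : (k : ℝ) ≤ (A : ℝ) * lam) (h2 : (A : ℝ) * lam ≤ (k : ℝ) + 1)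
    (h3 : (k : ℝ) < (B : ℝ) * lam) (h4 : (B : ℝ) * lam < (k : ℝ) + 1) :
    ∃ k' : ℤ, (k' : ℝ) ≤ (A : ℝ) * l ∧ (A : ℝ) * l ≤ (k' : ℝ) + 1 ∧
      (k' : ℝ) < (B : ℝ) * l ∧ (B : ℝ) * l < (k' : ℝ) + 1 ∧ (A : ℝ) * l ≠ (B : ℝ) * l := by
  have hr1 : (1 : ℝ) ≤ (r : ℝ) := by exact_mod_cast hr
  have hr0 : (0 : ℝ) < (r : ℝ) := by linarith
  have hrl : (r : ℝ) * lam = (r : ℝ) + l - 1 := by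
    rw [hlam]; field_simp; ring
  have hBA' : (B : ℝ) + 1 ≤ (A : ℝ) := by exact_mod_cast hBA
  have e1 : (B : ℝ) * l = (r : ℝ) * ((B : ℝ) * lam) - ((r : ℝ) - 1) * (B : ℝ) := by
    linear_combination (-(B : ℝ)) * hrl
  have e2 : (A : ℝ) * l = (r : ℝ) * ((A : ℝ) * lam) - ((r : ℝ) - 1) * (A : ℝ) := by
    linear_combination (-(A : ℝ)) * hrl
  have p1 : (r : ℝ) * ((A : ℝ) * lam) ≤ (r : ℝ) * ((k : ℝ) + 1) :=
    mul_le_mul_of_nonneg_left h2 hr0.le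
  have p2 : (r : ℝ) * (k : ℝ) < (r : ℝ) * ((B : ℝ) * lam) :=
    mul_lt_mul_of_pos_left h3 hr0
  have p3 : 0 ≤ ((A : ℝ) - (B : ℝ) - 1) * ((r : ℝ) - 1) :=
    mul_nonneg (by linarith) (by linarith)
  have p4 : 0 < ((A : ℝ) - (B : ℝ)) * l := mul_pos (by linarith) hl
  refine ⟨r * k - (r - 1) * B, ?_, ?_, ?_, ?_, ?_⟩
  · push_cast; nlinarith [p1, p2, p3, p4, e1, e2]
  · push_cast; nlinarith [p1, p2, p3, p4, e1, e2]
  · push_cast; nlinarith [p1, p2, p3, p4, e1, e2]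
  · push_cast; nlinarith [p1, p2, p3, p4, e1, e2]
  · intro heq; nlinarith [p4, heq]

theorem rational_diagonal_contraction (p q : ℤ) (hp : 1 ≤ p) (hq : 1 ≤ q)
    (hpq : IsCoprime p q) (ℓ : ℚ) (hℓ : 0 < ℓ)
    (h : Disjoint (RectLat ((ℓ : ℝ) * (p : ℝ)) ((ℓ : ℝ) * (q : ℝ))) Dprime)
    (r : ℤ) (hr : 1 ≤ r) :
    Disjoint (RectLat ((1 + ((ℓ : ℝ) - 1) / (r : ℝ)) * (p : ℝ))
                  ((1 + ((ℓ : ℝ) - 1) / (r : ℝ)) * (q : ℝ))) Dprime := by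
  rw [Set.disjoint_left] at h ⊢
  rintro a ⟨m, n, rfl⟩ hmem
  set lam : ℝ := 1 + ((ℓ : ℝ) - 1) / (r : ℝ) with hlam
  have hl : (0 : ℝ) < (ℓ : ℝ) := by exact_mod_cast hℓ
  simp only [Dprime, Set.mem_iUnion, Set.mem_setOf_eq] at hmem
  obtain ⟨k, h1, h2, h3, h4, h5⟩ := hmem
  have eA : (m : ℝ) * (lam * (p : ℝ)) = ((m * p : ℤ) : ℝ) * lam := by push_cast; ring
  have eB : (n : ℝ) * (lam * (q : ℝ)) = ((n * q : ℤ) : ℝ) * lam := by push_cast; ring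
  rw [eA] at h1 h2 h5
  rw [eB] at h3 h4 h5
  have hAB : m * p ≠ n * q := by
    intro hAB
    apply h5
    rw [hAB]
  rcases lt_or_gt_of_ne hAB with hlt | hgt
  · -- A < B : negate
    obtain ⟨k', c1, c2, c3, c4, c5⟩ := key_lemma (ℓ : ℝ) lam hl r hr hlam
      (-(m * p)) (-(n * q)) (-k - 1) (by omega)
      (by push_cast; push_cast at h2; linarith)
      (by push_cast; push_cast at h1; linarith)
      (by push_cast; push_cast at h4; linarith)
      (by push_cast; push_cast at h3; linarith)
    refine h (a := (((-m : ℤ) : ℝ) * ((ℓ : ℝ) * (p : ℝ)), ((-n : ℤ) : ℝ) * ((ℓ : ℝ) * (q : ℝ))))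
      ⟨-m, -n, rfl⟩ ?_
    simp only [Dprime, Set.mem_iUnion, Set.mem_setOf_eq]
    refine ⟨k', ?_, ?_, ?_, ?_, ?_⟩ <;> push_cast <;> push_cast at c1 c2 c3 c4 c5 <;>
      first
        | linarith
        | (intro hh; apply c5; push_cast; linarith)
  · obtain ⟨k', c1, c2, c3, c4, c5⟩ := key_lemma (ℓ : ℝ) lam hl r hr hlam
      (m * p) (n * q) k hgt h1 h2 h3 h4
    refine h (a := ((m : ℝ) * ((ℓ : ℝ) * (p : ℝ)), (n : ℝ) * ((ℓ : ℝ) * (q : ℝ))))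
      ⟨m, n, rfl⟩ ?_
    simp only [Dprime, Set.mem_iUnion, Set.mem_setOf_eq]
    refine ⟨k', ?_, ?_, ?_, ?_, ?_⟩ <;> push_cast <;> push_cast at c1 c2 c3 c4 c5 <;>
      first
        | linarith
        | (intro hh; apply c5; push_cast; linarith)
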